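/- For any distinct t_1, …, t_n ∈ T, the distribution function H of (ζ_Z(t_1), …, ζ_Z(t_n)) satisfies the inf-argmax representation: for every x = (x_1, …, x_n) ∈ ℝ^n, −ln H(x) = Σ_{k=1}^n e^{−x_k} · P( inf argmax_{1≤i≤n}( Θ_{t_k}(t_i) − x_i ) = k ), where inf argmax denotes the smallest index attaining the maximum. -/
import Mathlib


open MeasureTheory ProbabilityTheory Filter
open scoped ENNReal NNReal

noncomputable section

/-- `e^x` for `x ∈ [-∞,∞]`, as an extended nonnegative real. -/
def expE (x : EReal) : ℝ≥0∞ :=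
  if x = ⊤ then ⊤ else if x = ⊥ then 0 else ENNReal.ofReal (Real.exp x.toReal)

/-- `e^{-L}` for `L ∈ [0,∞]`. -/
def expNeg (L : ℝ≥0∞) : ℝ≥0∞ :=
  if L = ⊤ then 0 else ENNReal.ofReal (Real.exp (-L.toReal))

/-- natural logarithm, from `[0,∞]` to `[-∞,∞]`. -/
def logE (L : ℝ≥0∞) : EReal :=
  if L = 0 then ⊥ else if L = ⊤ then ⊤ else ((Real.log L.toReal : ℝ) : EReal)

/-- Equality of all finite-dimensional distributions of two processes. -/
def SameFDD {T E Ω₁ Ω₂ : Type*} [MeasurableSpace Ω₁] [MeasurableSpace Ω₂] [MeasurableSpace E]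
    (μ₁ : Measure Ω₁) (X : T → Ω₁ → E) (μ₂ : Measure Ω₂) (Y : T → Ω₂ → E) : Prop :=
  ∀ (n : ℕ) (t : Fin n → T),
    Measure.map (fun ω i => X (t i) ω) μ₁ = Measure.map (fun ω i => Y (t i) ω) μ₂

/-- `ζ` is (a version of) the max-stable process associated with the spectral process `Z`,
i.e. its finite-dimensional distributions are the ones of the de Haan representation
`ζ_Z(t) = max_{i ≥ 1} (P_i + Z_i(t))` built from a Poisson point process `Σ ε_{P_i}` on `ℝ`
with intensity `e^{-x} dx`, independent of the i.i.d. copies `Z_i` of `Z`; equivalently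
`P(ζ(t₁) ≤ x₁, …, ζ(tₙ) ≤ xₙ) = exp( - E[ max_i e^{Z(t_i) - x_i} ] )`. -/
def IsAssocMaxStable {T Ω Ω' : Type*} [MeasurableSpace Ω] [MeasurableSpace Ω']
    (μ' : Measure Ω') (ζ : T → Ω' → ℝ) (μ : Measure Ω) (Z : T → Ω → EReal) : Prop :=
  ∀ (n : ℕ) (t : Fin n → T) (x : Fin n → ℝ),
    μ' {ω | ∀ i, ζ (t i) ω ≤ x i}
      = expNeg (∫⁻ ω, ⨆ i, expE (Z (t i) ω - (x i : EReal)) ∂μ)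

/-- The law of the path `ω ↦ Z(·)(ω)` on the product σ-field. -/
def pathLaw {T Ω : Type*} [MeasurableSpace Ω] (μ : Measure Ω) (Z : T → Ω → EReal) :
    Measure (T → EReal) := Measure.map (fun ω t => Z t ω) μ

/-- Law of the exponentially tilted process `Z^{[h]}`:
`P(Z^{[h]} ∈ A) = E[ e^{Z(h)} 1_{Z ∈ A} ]`.  (When `P(Z(h) = -∞) > 0` this is the law of the
tilt `V_h^{[h]}` of the conditional process `V_h = Z | (Z(h) > -∞)` by
`V_h(h) - ln E[e^{V_h(h)}]`, since the density `e^{f(h)}` vanishes on `{f : f(h) = -∞}`.) -/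
def tiltLaw {T Ω : Type*} [MeasurableSpace Ω] (μ : Measure Ω) (Z : T → Ω → EReal) (h : T) :
    Measure (T → EReal) := (pathLaw μ Z).withDensity fun f => expE (f h)

/-- Law of the recentred tilted process `Θ_h = Ξ_h Z`, `Θ_h(t) = Z^{[h]}(t) - Z^{[h]}(h)`
(equal to `Θ_h(t) = V_h^{[h]}(t) - V_h^{[h]}(h)` in the general case). -/
def ThetaLaw {T Ω : Type*} [MeasurableSpace Ω] (μ : Measure Ω) (Z : T → Ω → EReal) (h : T) :
    Measure (T → EReal) := Measure.map (fun f t => f t - f h) (tiltLaw μ Z h)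

/-- The smallest index attaining the maximum of `g`. -/
def infArgmax {n : ℕ} (g : Fin (n + 1) → EReal) : Fin (n + 1) :=
  (Finset.univ.filter fun i => ∀ j, g j ≤ g i).min' (by
    obtain ⟨i, -, hi⟩ :=
      Finset.exists_max_image (Finset.univ : Finset (Fin (n + 1))) g ⟨0, Finset.mem_univ 0⟩
    exact ⟨i, Finset.mem_filter.mpr ⟨Finset.mem_univ i, fun j => hi j (Finset.mem_univ j)⟩⟩)

lemma expE_bot : expE ⊥ = 0 := by simp [expE]

lemma expE_coe (r : ℝ) : expE (r : EReal) = ENNReal.ofReal (Real.exp r) := by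
  simp [expE, EReal.coe_ne_top, EReal.coe_ne_bot]

lemma measurable_expE : Measurable expE := by
  unfold expE
  apply Measurable.ite (by simp [Set.setOf_eq_eq_singleton]) measurable_const
  apply Measurable.ite (by simp [Set.setOf_eq_eq_singleton]) measurable_const
  exact ENNReal.measurable_ofReal.comp (Real.measurable_exp.comp measurable_ereal_toReal)

lemma expE_mono : Monotone expE := by
  intro a b hab
  induction b using EReal.rec with
  | bot => rw [le_bot_iff.mp hab]
  | top => simp [expE]
  | coe b =>
    induction a using EReal.rec with
    | bot => simp [expE_bot]
    | top => exact absurd hab (by simp)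
    | coe a =>
      rw [expE_coe, expE_coe]
      exact ENNReal.ofReal_le_ofReal (Real.exp_le_exp.mpr (by exact_mod_cast hab))

lemma expE_sub_real (a : EReal) (x : ℝ) :
    expE (a - (x : EReal)) = ENNReal.ofReal (Real.exp (-x)) * expE a := by
  induction a using EReal.rec with
  | bot => simp [EReal.bot_sub, expE_bot]
  | top =>
    rw [EReal.top_sub_coe]
    have h1 : expE ⊤ = ⊤ := by simp [expE]
    rw [h1, ENNReal.mul_top (by simp [Real.exp_pos])]
  | coe a =>
    rw [← EReal.coe_sub, expE_coe, expE_coe, ← ENNReal.ofReal_mul (Real.exp_nonneg _),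
      ← Real.exp_add]
    ring_nf

lemma ereal_sub_le_sub_iff (a b : EReal) (c : ℝ) : a - (c : EReal) ≤ b - c ↔ a ≤ b := by
  rw [sub_eq_add_neg, sub_eq_add_neg, ← EReal.coe_neg]
  exact (EReal.addLECancellable_coe (-c)).add_le_add_iff_right

lemma Measurable.ereal_sub {α : Type*} [MeasurableSpace α] {f g : α → EReal}
    (hf : Measurable f) (hg : Measurable g) : Measurable (fun a => f a - g a) := by
  have key : (fun a => f a - g a) = fun a =>
      if f a = ⊥ ∨ g a = ⊤ then ⊥ else if f a = ⊤ ∨ g a = ⊥ then ⊤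
      else (((f a).toReal - (g a).toReal : ℝ) : EReal) := by
    funext a
    induction f a using EReal.rec with
    | bot => simp [EReal.bot_sub]
    | top =>
      induction g a using EReal.rec with
      | bot => simp [EReal.coe_sub_bot]
      | top => simp [EReal.sub_top]
      | coe b => simp [EReal.top_sub_coe]
    | coe r =>
      induction g a using EReal.rec with
      | bot => simp [EReal.coe_sub_bot]
      | top => simp [EReal.sub_top]
      | coe b => simp [← EReal.coe_sub]
  rw [key]
  apply Measurable.ite
  · exact ((hf (measurableSet_singleton ⊥)).union (hg (measurableSet_singleton ⊤)))
  · exact measurable_const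
  apply Measurable.ite
  · exact ((hf (measurableSet_singleton ⊤)).union (hg (measurableSet_singleton ⊥)))
  · exact measurable_const
  · exact measurable_coe_real_ereal.comp (hf.ereal_toReal.sub hg.ereal_toReal)

lemma infArgmax_eq_iff {n : ℕ} (g : Fin (n + 1) → EReal) (k : Fin (n + 1)) :
    infArgmax g = k ↔ (∀ j, g j ≤ g k) ∧ ∀ l, (∀ j, g j ≤ g l) → k ≤ l := by
  unfold infArgmax
  constructor
  · rintro rfl
    constructor
    · have := Finset.min'_mem (Finset.univ.filter fun i => ∀ j, g j ≤ g i) (by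
        obtain ⟨i, -, hi⟩ :=
          Finset.exists_max_image (Finset.univ : Finset (Fin (n + 1))) g ⟨0, Finset.mem_univ 0⟩
        exact ⟨i, Finset.mem_filter.mpr ⟨Finset.mem_univ i, fun j => hi j (Finset.mem_univ j)⟩⟩)
      simpa using (Finset.mem_filter.mp this).2
    · intro l hl
      exact Finset.min'_le _ _ (Finset.mem_filter.mpr ⟨Finset.mem_univ _, hl⟩)
  · rintro ⟨h1, h2⟩
    apply le_antisymm
    · exact Finset.min'_le _ _ (Finset.mem_filter.mpr ⟨Finset.mem_univ _, h1⟩)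
    · apply Finset.le_min'
      intro y hy
      exact h2 y (Finset.mem_filter.mp hy).2

lemma infArgmax_sub_const {n : ℕ} (g : Fin (n + 1) → EReal) (c : ℝ) :
    infArgmax (fun i => g i - (c : EReal)) = infArgmax g := by
  obtain ⟨h1, h2⟩ := (infArgmax_eq_iff (fun i => g i - (c : EReal))
    (infArgmax (fun i => g i - (c : EReal)))).mp rfl
  exact ((infArgmax_eq_iff g _).mpr
    ⟨fun j => (ereal_sub_le_sub_iff _ _ c).mp (h1 j),
     fun l hl => h2 l (fun j => (ereal_sub_le_sub_iff _ _ c).mpr (hl j))⟩).symm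

lemma measurable_infArgmax {n : ℕ} : Measurable (infArgmax (n := n)) := by
  refine measurable_to_countable' fun k => ?_
  have : (infArgmax (n := n)) ⁻¹' {k} =
      {g : Fin (n+1) → EReal | ∀ j, g j ≤ g k} ∩
        ⋂ l, {g : Fin (n+1) → EReal | (∀ j, g j ≤ g l) → k ≤ l} := by
    ext g
    simp [infArgmax_eq_iff, forall_and]
  rw [this]
  rw [Set.setOf_forall]
  apply MeasurableSet.inter
  · exact MeasurableSet.iInter fun j =>
      measurableSet_le (measurable_pi_apply j) (measurable_pi_apply k)
  · apply MeasurableSet.iInter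
    intro l
    by_cases hkl : k ≤ l
    · have : {g : Fin (n+1) → EReal | (∀ j, g j ≤ g l) → k ≤ l} = Set.univ := by
        ext g; simp [hkl]
      rw [this]; exact MeasurableSet.univ
    · have : {g : Fin (n+1) → EReal | (∀ j, g j ≤ g l) → k ≤ l} = {g | ∀ j, g j ≤ g l}ᶜ := by
        ext g; simp [hkl]
      rw [this, Set.setOf_forall]
      exact (MeasurableSet.iInter fun j =>
        measurableSet_le (measurable_pi_apply j) (measurable_pi_apply l)).compl

lemma key_sum {n : ℕ} (g : Fin (n + 1) → EReal) (hg : ∀ i, g i ≠ ⊤) (x : Fin (n + 1) → ℝ) :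
    ∑ k, (if infArgmax (fun i => g i - g k - (x i : EReal)) = k
        then expE (g k - (x k : EReal)) else 0)
      = ⨆ i, expE (g i - (x i : EReal)) := by
  set K := infArgmax (fun i => g i - (x i : EReal)) with hK
  obtain ⟨hK1, -⟩ := (infArgmax_eq_iff (fun i => g i - (x i : EReal)) K).mp rfl
  have hterm : ∀ k, (if infArgmax (fun i => g i - g k - (x i : EReal)) = k
      then expE (g k - (x k : EReal)) else 0)
      = if k = K then expE (g k - (x k : EReal)) else 0 := by
    intro k
    by_cases hbot : g k = ⊥
    · have h0 : expE (g k - (x k : EReal)) = 0 := by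
        rw [hbot, EReal.bot_sub, expE_bot]
      simp [h0]
    · have hr : ((g k).toReal : EReal) = g k := EReal.coe_toReal (hg k) hbot
      have hfun : (fun i => g i - g k - (x i : EReal))
          = fun i => (g i - (x i : EReal)) - ((g k).toReal : EReal) := by
        funext i
        rw [hr, sub_eq_add_neg, sub_eq_add_neg, sub_eq_add_neg, sub_eq_add_neg, add_right_comm]
      rw [hfun, infArgmax_sub_const, ← hK]
      by_cases hkK : k = K
      · simp [hkK]
      · simp [hkK, Ne.symm hkK]
  rw [Finset.sum_congr rfl fun k _ => hterm k,
    Finset.sum_ite_eq' Finset.univ K (fun k => expE (g k - (x k : EReal)))]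
  simp only [Finset.mem_univ, if_true]
  apply le_antisymm
  · exact le_iSup (fun i => expE (g i - (x i : EReal))) K
  · exact iSup_le fun i => expE_mono (hK1 i)

/-- Theorem 6: inf-argmax representation.
For distinct `t₁, …, tₙ₊₁` the d.f. `H` of `(ζ_Z(t₁), …, ζ_Z(tₙ₊₁))` satisfies
`-ln H(x) = Σ_k e^{-x_k} P( inf argmax_i (Θ_{t_k}(t_i) - x_i) = k )`. -/
theorem statement_8 {T Ω Ω' : Type*} [MeasurableSpace Ω] [MeasurableSpace Ω']
    (μ : Measure Ω) (μ' : Measure Ω') [IsProbabilityMeasure μ] [IsProbabilityMeasure μ']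
    (Z : T → Ω → EReal) (hZm : ∀ t, Measurable (Z t))
    (hZne : ∀ t, ∀ᵐ ω ∂μ, Z t ω ≠ ⊤)
    (hZexp : ∀ t, ∫⁻ ω, expE (Z t ω) ∂μ = 1)
    (ζ : T → Ω' → ℝ) (hζ : IsAssocMaxStable μ' ζ μ Z)
    (n : ℕ) (t : Fin (n + 1) → T) (ht : Function.Injective t) (x : Fin (n + 1) → ℝ) :
    μ' {ω | ∀ i, ζ (t i) ω ≤ x i}
      = expNeg (∑ k, ENNReal.ofReal (Real.exp (-(x k))) *
          ThetaLaw μ Z (t k) {f | infArgmax (fun i => f (t i) - (x i : EReal)) = k}) := by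
  rw [hζ (n + 1) t x]
  congr 1
  set A : Fin (n + 1) → Set (T → EReal) := fun k =>
    {f | infArgmax (fun i => f (t i) - (x i : EReal)) = k} with hA
  have m1 : Measurable (fun ω (s : T) => Z s ω) :=
    measurable_pi_lambda _ fun s => hZm s
  have m2 : ∀ h : T, Measurable (fun f : T → EReal => fun s => f s - f h) := fun h =>
    measurable_pi_lambda _ fun s => (measurable_pi_apply s).ereal_sub (measurable_pi_apply h)
  have mA : ∀ k, MeasurableSet (A k) := by
    intro k
    have hAk : A k
        = (fun f : T → EReal => infArgmax (fun i => f (t i) - (x i : EReal))) ⁻¹' {k} := rfl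
    rw [hAk]
    exact (measurable_infArgmax.comp (measurable_pi_lambda _ fun i =>
      (measurable_pi_apply (t i)).ereal_sub measurable_const)) (measurableSet_singleton k)
  set S : Fin (n + 1) → Set Ω := fun k =>
    {ω | infArgmax (fun i => Z (t i) ω - Z (t k) ω - (x i : EReal)) = k} with hSdef
  have mS : ∀ k, MeasurableSet (S k) := by
    intro k
    have hSk : S k
        = (fun ω => infArgmax (fun i => Z (t i) ω - Z (t k) ω - (x i : EReal))) ⁻¹' {k} := rfl
    rw [hSk]
    exact (measurable_infArgmax.comp (measurable_pi_lambda _ fun i =>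
      ((hZm (t i)).ereal_sub (hZm (t k))).ereal_sub measurable_const))
      (measurableSet_singleton k)
  have hTheta : ∀ k, ThetaLaw μ Z (t k) (A k) = ∫⁻ ω in S k, expE (Z (t k) ω) ∂μ := by
    intro k
    rw [ThetaLaw, tiltLaw, pathLaw,
      Measure.map_apply (m2 (t k)) (mA k),
      withDensity_apply _ ((m2 (t k)) (mA k)),
      setLIntegral_map (f := fun f : T → EReal => expE (f (t k))) ((m2 (t k)) (mA k))
        (measurable_expE.comp (measurable_pi_apply (t k))) m1]
    rfl
  have hstep : ∀ k, ENNReal.ofReal (Real.exp (-(x k))) * ThetaLaw μ Z (t k) (A k)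
      = ∫⁻ ω, (S k).indicator (fun ω => expE (Z (t k) ω - (x k : EReal))) ω ∂μ := by
    intro k
    rw [hTheta k,
      ← lintegral_indicator (mS k) (fun ω => expE (Z (t k) ω)),
      ← lintegral_const_mul (f := (S k).indicator fun ω => expE (Z (t k) ω)) _
        ((measurable_expE.comp (hZm (t k))).indicator (mS k))]
    congr 1
    funext ω
    by_cases hω : ω ∈ S k
    · simp [Set.indicator_of_mem hω, expE_sub_real]
    · simp [Set.indicator_of_notMem hω]
  rw [Finset.sum_congr rfl fun k _ => hstep k,
    ← lintegral_finset_sum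
      (f := fun k ω => (S k).indicator (fun ω => expE (Z (t k) ω - (x k : EReal))) ω) _
      fun k _ => ((measurable_expE.comp ((hZm (t k)).ereal_sub measurable_const)).indicator
        (mS k))]
  apply lintegral_congr_ae
  filter_upwards [ae_all_iff.mpr fun i => hZne (t i)] with ω hω
  rw [← key_sum (fun i => Z (t i) ω) hω x]
  apply Finset.sum_congr rfl
  intro k _
  rw [Set.indicator_apply]
  simp only [hSdef, Set.mem_setOf_eq]


end
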